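/- If A₁ ∈ Â₁ and A₂ ∈ Â₂ for MVE-algebras Â₁, Â₂, then the indicator 1_{A₁ ∩ A₂} is a UMVUE; consequently any finite linear combination Σ cᵢ 1_{A₁ᵢ} 1_{A₂ᵢ} with A₁ᵢ ∈ Â₁, A₂ᵢ ∈ Â₂ is a UMVUE. -/

import Mathlib

open MeasureTheory ProbabilityTheory

/-- `χ` is a square-integrable unbiased estimator of zero for the family `P`. -/
def IsUEZero {𝓧 Θ : Type*} [MeasurableSpace 𝓧] (P : Θ → Measure 𝓧) (χ : 𝓧 → ℝ) : Prop :=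
  Measurable χ ∧ (∀ θ, MemLp χ 2 (P θ)) ∧ ∀ θ, ∫ x, χ x ∂P θ = 0

/-- `g` is a UMVUE: minimal variance at every `θ` among all unbiased estimators
(with finite second moments) of the same parametric function. -/
def IsUMVUE {𝓧 Θ : Type*} [MeasurableSpace 𝓧] (P : Θ → Measure 𝓧) (g : 𝓧 → ℝ) : Prop :=
  Measurable g ∧ (∀ θ, MemLp g 2 (P θ)) ∧
    ∀ g' : 𝓧 → ℝ, Measurable g' → (∀ θ, MemLp g' 2 (P θ)) →
      (∀ θ, ∫ x, g' x ∂P θ = ∫ x, g x ∂P θ) →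
      ∀ θ, variance g (P θ) ≤ variance g' (P θ)

/-- A sub-σ-algebra `𝓐` of the basic σ-algebra `m` is an MVE-algebra for the family `P`
if every `𝓐`-measurable statistic with finite second moments under every `P θ`
is a UMVUE of its expectation. -/
def IsMVEAlgebra {𝓧 Θ : Type*} [m : MeasurableSpace 𝓧] (P : Θ → Measure 𝓧)
    (𝓐 : MeasurableSpace 𝓧) : Prop :=
  𝓐 ≤ m ∧
    ∀ g : 𝓧 → ℝ, Measurable[𝓐] g → (∀ θ, MemLp g 2 (P θ)) → @IsUMVUE 𝓧 Θ m P g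

lemma mul_int_aux {𝓧 : Type*} [MeasurableSpace 𝓧] {μ : Measure 𝓧} {f g : 𝓧 → ℝ}
    (hf : MemLp f 2 μ) (hg : MemLp g 2 μ) : Integrable (fun x => f x * g x) μ := by
  refine (((hf.integrable_sq).add (hg.integrable_sq)).div_const 2).mono'
    (hf.aestronglyMeasurable.mul hg.aestronglyMeasurable) ?_
  filter_upwards with x
  simp only [Pi.add_apply, Pi.div_apply, Real.norm_eq_abs, abs_mul]
  nlinarith [sq_nonneg (|f x| - |g x|), abs_nonneg (f x), abs_nonneg (g x),
    sq_abs (f x), sq_abs (g x)]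

lemma var_add_aux {𝓧 : Type*} [MeasurableSpace 𝓧] {μ : Measure 𝓧} [IsProbabilityMeasure μ]
    {g χ : 𝓧 → ℝ} (hg : MemLp g 2 μ) (hχ : MemLp χ 2 μ) (hχ0 : ∫ x, χ x ∂μ = 0) :
    variance (fun x => g x + χ x) μ
      = variance g μ + 2 * ∫ x, g x * χ x ∂μ + ∫ x, χ x ^ 2 ∂μ := by
  have hgi := hg.integrable one_le_two
  have hχi := hχ.integrable one_le_two
  have hgs := hg.integrable_sq
  have hχs := hχ.integrable_sq
  have hgχ := mul_int_aux hg hχ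
  rw [variance_eq_sub (show MemLp (fun x => g x + χ x) 2 μ from hg.add hχ),
    variance_eq_sub hg]
  have e1 : ∫ x, ((fun x => g x + χ x) ^ 2) x ∂μ
      = ∫ x, (g x ^ 2 + (2 * (g x * χ x) + χ x ^ 2)) ∂μ := by
    refine integral_congr_ae (ae_of_all _ fun x => ?_)
    simp only [Pi.pow_apply]; ring
  have e2 : ∫ x, (fun x => g x + χ x) x ∂μ = ∫ x, g x ∂μ := by
    simp only
    rw [integral_add hgi hχi, hχ0, add_zero]
  have hsum2 : Integrable (fun x => 2 * (g x * χ x) + χ x ^ 2) μ :=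
    (hgχ.const_mul 2).add hχs
  rw [e1, e2, integral_add hgs hsum2, integral_add (hgχ.const_mul 2) hχs, integral_const_mul]
  have e3 : ∫ x, (g ^ 2) x ∂μ = ∫ x, g x ^ 2 ∂μ := by simp [Pi.pow_apply]
  rw [e3]; ring

lemma umvue_of_orth {𝓧 Θ : Type*} [m : MeasurableSpace 𝓧] (P : Θ → Measure 𝓧)
    [∀ θ, IsProbabilityMeasure (P θ)] {g : 𝓧 → ℝ}
    (hgm : Measurable g) (hg2 : ∀ θ, MemLp g 2 (P θ))
    (h : ∀ χ : 𝓧 → ℝ, IsUEZero P χ → ∀ θ, ∫ x, g x * χ x ∂P θ = 0) :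
    IsUMVUE P g := by
  refine ⟨hgm, hg2, fun g' hg'm hg'2 hmean θ => ?_⟩
  set χ : 𝓧 → ℝ := fun x => g' x - g x with hχdef
  have hχ : IsUEZero P χ := by
    refine ⟨hg'm.sub hgm, fun θ' => (hg'2 θ').sub (hg2 θ'), fun θ' => ?_⟩
    rw [hχdef]
    rw [integral_sub ((hg'2 θ').integrable one_le_two) ((hg2 θ').integrable one_le_two),
      hmean θ', sub_self]
  have horth := h χ hχ θ
  have hrep : g' = fun x => g x + χ x := by funext x; simp [hχdef]
  have hχ2 : MemLp χ 2 (P θ) := (hg'2 θ).sub (hg2 θ)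
  rw [hrep, var_add_aux (hg2 θ) hχ2 (hχ.2.2 θ), horth]
  have : 0 ≤ ∫ x, χ x ^ 2 ∂P θ := integral_nonneg fun x => sq_nonneg _
  linarith

lemma orth_of_umvue {𝓧 Θ : Type*} [m : MeasurableSpace 𝓧] {P : Θ → Measure 𝓧}
    [∀ θ, IsProbabilityMeasure (P θ)] {g χ : 𝓧 → ℝ}
    (hU : IsUMVUE P g) (hχ : IsUEZero P χ) (θ : Θ) :
    ∫ x, g x * χ x ∂P θ = 0 := by
  obtain ⟨hgm, hg2, hmin⟩ := hU
  obtain ⟨hχm, hχ2, hχ0⟩ := hχ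
  set C := ∫ x, g x * χ x ∂P θ with hC
  set V := ∫ x, χ x ^ 2 ∂P θ with hV
  have hVnn : 0 ≤ V := integral_nonneg fun x => sq_nonneg _
  have key : ∀ t : ℝ, 0 ≤ 2 * (t * C) + t ^ 2 * V := by
    intro t
    have h2 : ∀ θ', MemLp (fun x => g x + t * χ x) 2 (P θ') :=
      fun θ' => (hg2 θ').add ((hχ2 θ').const_mul t)
    have hmean : ∀ θ', ∫ x, (g x + t * χ x) ∂P θ' = ∫ x, g x ∂P θ' := by
      intro θ'
      rw [integral_add ((hg2 θ').integrable one_le_two)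
        (((hχ2 θ').integrable one_le_two).const_mul t), integral_const_mul, hχ0, mul_zero,
        add_zero]
    have hle := hmin (fun x => g x + t * χ x) (hgm.add (hχm.const_mul t)) h2 hmean θ
    have hχ0' : ∫ x, t * χ x ∂P θ = 0 := by rw [integral_const_mul, hχ0, mul_zero]
    rw [var_add_aux (hg2 θ) ((hχ2 θ).const_mul t) hχ0'] at hle
    have e1 : ∫ x, g x * (t * χ x) ∂P θ = t * C := by
      rw [hC, ← integral_const_mul]
      congr 1; funext x; ring
    have e2 : ∫ x, (t * χ x) ^ 2 ∂P θ = t ^ 2 * V := by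
      rw [hV, ← integral_const_mul]
      congr 1; funext x; ring
    rw [e1, e2] at hle
    linarith
  rcases hVnn.eq_or_lt with hV0 | hVpos
  · have k1 := key 1
    have k2 := key (-1)
    nlinarith
  · have k := key (-(C / V))
    have e : 2 * (-(C / V) * C) + (-(C / V)) ^ 2 * V = -(C ^ 2 / V) := by
      field_simp; ring
    rw [e] at k
    have h1 : C ^ 2 / V = 0 :=
      le_antisymm (by linarith) (div_nonneg (sq_nonneg C) hVpos.le)
    have h2 : C ^ 2 = 0 := by
      rcases div_eq_zero_iff.mp h1 with h | h
      · exact h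
      · exact absurd h hVpos.ne'
    exact sq_eq_zero_iff.mp h2

theorem stmt7 {𝓧 Θ : Type*} [m : MeasurableSpace 𝓧]
    (P : Θ → Measure 𝓧) [∀ θ, IsProbabilityMeasure (P θ)]
    (𝓐₁ 𝓐₂ : MeasurableSpace 𝓧)
    (h₁ : @IsMVEAlgebra 𝓧 Θ m P 𝓐₁) (h₂ : @IsMVEAlgebra 𝓧 Θ m P 𝓐₂) :
    (∀ A₁ A₂ : Set 𝓧, MeasurableSet[𝓐₁] A₁ → MeasurableSet[𝓐₂] A₂ →
      @IsUMVUE 𝓧 Θ m P ((A₁ ∩ A₂).indicator fun _ => (1 : ℝ))) ∧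
    (∀ (n : ℕ) (c : Fin n → ℝ) (A B : Fin n → Set 𝓧),
      (∀ i, MeasurableSet[𝓐₁] (A i)) → (∀ i, MeasurableSet[𝓐₂] (B i)) →
      @IsUMVUE 𝓧 Θ m P (fun x =>
        ∑ i, c i * (A i).indicator (fun _ => (1 : ℝ)) x *
          (B i).indicator (fun _ => (1 : ℝ)) x)) := by
  letI : MeasurableSpace 𝓧 := m
  -- basic facts about indicators in a MVE sub-σ-algebra
  have ind_umvue : ∀ (𝓐 : MeasurableSpace 𝓧), @IsMVEAlgebra 𝓧 Θ m P 𝓐 →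
      ∀ A : Set 𝓧, MeasurableSet[𝓐] A →
      @IsUMVUE 𝓧 Θ m P (A.indicator fun _ => (1 : ℝ)) := by
    intro 𝓐 h𝓐 A hA
    refine h𝓐.2 _ (@measurable_const ℝ 𝓧 _ 𝓐 1 |>.indicator hA) fun θ => ?_
    exact (memLp_const (μ := P θ) (p := 2) (1 : ℝ)).indicator (h𝓐.1 _ hA)
  -- the key orthogonality property
  have orth_inter : ∀ A B : Set 𝓧, MeasurableSet[𝓐₁] A → MeasurableSet[𝓐₂] B →
      ∀ χ : 𝓧 → ℝ, IsUEZero P χ → ∀ θ,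
      ∫ x, (A ∩ B).indicator (fun _ => (1 : ℝ)) x * χ x ∂P θ = 0 := by
    intro A B hA hB χ hχ θ
    have hmB : MeasurableSet B := h₂.1 _ hB
    set χ' : 𝓧 → ℝ := fun x => B.indicator (fun _ => (1 : ℝ)) x * χ x with hχ'def
    have hχ' : IsUEZero P χ' := by
      refine ⟨(measurable_const.indicator hmB).mul hχ.1, fun θ' => ?_, fun θ' => ?_⟩
      · refine (hχ.2.1 θ').of_le
          ((measurable_const.indicator hmB).mul hχ.1).aestronglyMeasurable ?_
        filter_upwards with x
        rw [hχ'def]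
        by_cases hx : x ∈ B <;>
          simp [Set.indicator_of_mem, Set.indicator_of_notMem, hx, abs_nonneg]
      · exact orth_of_umvue (ind_umvue 𝓐₂ h₂ B hB) hχ θ'
    have e : ∀ x, (A ∩ B).indicator (fun _ => (1 : ℝ)) x * χ x
        = A.indicator (fun _ => (1 : ℝ)) x * χ' x := by
      intro x
      rw [hχ'def]
      by_cases hxA : x ∈ A <;> by_cases hxB : x ∈ B <;>
        simp [Set.indicator_of_mem, Set.indicator_of_notMem, hxA, hxB, Set.mem_inter_iff]
    rw [integral_congr_ae (ae_of_all _ e)]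
    exact orth_of_umvue (ind_umvue 𝓐₁ h₁ A hA) hχ' θ
  constructor
  · intro A₁ A₂ hA₁ hA₂
    have hm12 : MeasurableSet (A₁ ∩ A₂) := (h₁.1 _ hA₁).inter (h₂.1 _ hA₂)
    exact umvue_of_orth P (measurable_const.indicator hm12)
      (fun θ => (memLp_const (μ := P θ) (p := 2) (1 : ℝ)).indicator hm12)
      (fun χ hχ θ => orth_inter A₁ A₂ hA₁ hA₂ χ hχ θ)
  · intro n c A B hA hB
    have hrep : (fun x => ∑ i, c i * (A i).indicator (fun _ => (1 : ℝ)) x *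
          (B i).indicator (fun _ => (1 : ℝ)) x)
        = fun x => ∑ i, c i * (A i ∩ B i).indicator (fun _ => (1 : ℝ)) x := by
      funext x
      refine Finset.sum_congr rfl fun i _ => ?_
      by_cases hxA : x ∈ A i <;> by_cases hxB : x ∈ B i <;>
        simp [Set.indicator_of_mem, Set.indicator_of_notMem, hxA, hxB, Set.mem_inter_iff,
          mul_assoc]
    rw [hrep]
    have hmi : ∀ i, MeasurableSet (A i ∩ B i) := fun i => (h₁.1 _ (hA i)).inter (h₂.1 _ (hB i))
    have hterm2 : ∀ i θ, MemLp (fun x => c i * (A i ∩ B i).indicator (fun _ => (1 : ℝ)) x)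
        2 (P θ) := fun i θ => ((memLp_const (μ := P θ) (p := 2) (1 : ℝ)).indicator (hmi i)).const_mul (c i)
    refine umvue_of_orth P ?_ ?_ ?_
    · exact Finset.measurable_sum Finset.univ
        (fun i _ => (measurable_const.indicator (hmi i)).const_mul (c i))
    · intro θ
      exact memLp_finset_sum Finset.univ (fun i _ => hterm2 i θ)
    · intro χ hχ θ
      have e : ∀ x, (∑ i, c i * (A i ∩ B i).indicator (fun _ => (1 : ℝ)) x) * χ x
          = ∑ i, c i * ((A i ∩ B i).indicator (fun _ => (1 : ℝ)) x * χ x) := by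
        intro x
        rw [Finset.sum_mul]
        exact Finset.sum_congr rfl fun i _ => by ring
      rw [integral_congr_ae (ae_of_all _ e),
        integral_finset_sum _ (fun i _ =>
          (mul_int_aux ((memLp_const (μ := P θ) (p := 2) (1 : ℝ)).indicator (hmi i)) (hχ.2.1 θ)).const_mul (c i))]
      refine Finset.sum_eq_zero fun i _ => ?_
      rw [integral_const_mul, orth_inter (A i) (B i) (hA i) (hB i) χ hχ θ, mul_zero]
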